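/- Ellipticity ratio inequality. Let n, m ≥ 1 be integers and let M = ℝ^{n×m} be the space of real n×m matrices with the Frobenius inner product ⟨·,·⟩ and norm |·|. Let λ, Λ > 0, let α ≥ 0 and δ ∈ (0,1) satisfy α/(2+α) = δ λ/Λ, and let A : M → M be a symmetric linear map with λ|ξ|² ≤ ⟨Aξ, ξ⟩ ≤ Λ|ξ|² for all ξ ∈ M. Then for every nonzero z ∈ ℝ^m and every P ∈ M, ⟨A P, |z|^α P + α |z|^{α−2} (Pz) ⊗ z⟩ ≥ (1−δ²) λ |z|^α |P|², where (Pz) ⊗ z denotes the n×m matrix with entries ((Pz) ⊗ z)_{ij} = (Pz)_i z_j and (Pz)_i = Σ_{k=1}^m P_{ik} z_k. (This is the pointwise form of the inequality A Dζ · D(ζ|ζ|^α) ≥ (1−δ²) λ |ζ|^α |Dζ|² for vector-valued ζ, with P playing the role of Dζ and z the role of ζ.) -/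

import Mathlib

lemma key_scalar (α u v t : ℝ) (hα : 0 ≤ α) (hu : 0 ≤ u) (hv : 0 ≤ v)
    (hcs : t ^ 2 ≤ u * v) :
    -((2 + α) ^ 2 * u / 4 + v) ≤ (2 + α) * t := by
  rcases le_or_gt 0 t with h | h
  · nlinarith [mul_nonneg (sq_nonneg (2+α)) hu, mul_nonneg (by linarith : (0:ℝ) ≤ 2+α) h]
  · have hX : 0 < (2 + α) ^ 2 * u / 4 + v - (2 + α) * t := by
      nlinarith [mul_nonneg (sq_nonneg (2+α)) hu, mul_pos (by linarith : (0:ℝ) < 2+α) (neg_pos.2 h)]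
    nlinarith [sq_nonneg ((2+α)^2 * u / 4 - v), mul_nonneg (sq_nonneg (2+α)) (sub_nonneg.2 hcs)]

lemma key_fac (lam Lam α δ : ℝ) (hlam : 0 < lam) (hLam : 0 < Lam) (hlL : lam ≤ Lam)
    (hα : 0 ≤ α) (hδ0 : 0 < δ) (hδ1 : δ < 1)
    (hratio : α * Lam = δ * lam * (2 + α)) :
    4 * (1 - δ ^ 2) * lam ≤ lam * (2 + α) ^ 2 - Lam * α ^ 2 := by
  have hδ2 : δ ^ 2 < 1 := by nlinarith
  have hsq : (α * Lam) ^ 2 = (δ * lam * (2 + α)) ^ 2 := by rw [hratio]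
  have h1 : 0 ≤ lam * (2 + α) ^ 2 * (δ ^ 2 * (Lam - lam)) := by
    apply mul_nonneg (by positivity)
    apply mul_nonneg (sq_nonneg δ) (by linarith)
  have h2 : 0 ≤ ((2 + α) ^ 2 - 4) * (lam * Lam * (1 - δ ^ 2)) := by
    apply mul_nonneg (by nlinarith)
    apply mul_nonneg (mul_pos hlam hLam).le (by linarith)
  have hL : 4 * (1 - δ ^ 2) * lam * Lam ≤ (lam * (2 + α) ^ 2 - Lam * α ^ 2) * Lam := by
    nlinarith [hsq, h1, h2]
  exact le_of_mul_le_mul_right hL hLam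

lemma key_combine (lam Lam α δ bQQ bRR bQR x2 y2 : ℝ)
    (hlam : 0 < lam) (hLam : 0 < Lam) (hlL : lam ≤ Lam) (hα : 0 ≤ α)
    (hδ0 : 0 < δ) (hδ1 : δ < 1)
    (hratio : α * Lam = δ * lam * (2 + α))
    (hx2 : 0 ≤ x2) (hy2 : 0 ≤ y2)
    (hQl : lam * x2 ≤ bQQ) (hQu : bQQ ≤ Lam * x2) (hRl : lam * y2 ≤ bRR)
    (hcs : bQR ^ 2 ≤ (bQQ - lam * x2) * (bRR - lam * y2)) :
    (1 - δ ^ 2) * lam * (x2 + y2) ≤ (1 + α) * bQQ + bRR + (2 + α) * bQR := by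
  have h1 := key_scalar α (bQQ - lam * x2) (bRR - lam * y2) bQR hα
    (by linarith) (by linarith) hcs
  have hfac := key_fac lam Lam α δ hlam hLam hlL hα hδ0 hδ1 hratio
  nlinarith [h1, mul_nonneg (sq_nonneg α) (sub_nonneg.2 hQu),
    mul_nonneg hx2 (sub_nonneg.2 hfac),
    mul_nonneg (mul_nonneg (sq_nonneg δ) hlam.le) hy2]

/-- Ellipticity ratio inequality. With the Frobenius inner product
`⟨ξ, η⟩ = ∑ i ∑ j ξ i j * η i j` on `n × m` matrices (here `Fin n → Fin m → ℝ`), if `A` is a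
symmetric linear map with `λ|ξ|² ≤ ⟨Aξ, ξ⟩ ≤ Λ|ξ|²`, `α ≥ 0`, `δ ∈ (0,1)` and
`α/(2+α) = δ λ/Λ`, then for every nonzero `z ∈ ℝ^m` and every matrix `P`,
`⟨A P, |z|^α P + α |z|^{α−2} (Pz) ⊗ z⟩ ≥ (1−δ²) λ |z|^α |P|²`. -/
theorem ellipticity_ratio (n m : ℕ) (hn : 1 ≤ n) (hm : 1 ≤ m)
    (lam Lam : ℝ) (hlam : 0 < lam) (hLam : 0 < Lam)
    (α δ : ℝ) (hα : 0 ≤ α) (hδ0 : 0 < δ) (hδ1 : δ < 1)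
    (hratio : α / (2 + α) = δ * (lam / Lam))
    (A : (Fin n → Fin m → ℝ) →ₗ[ℝ] (Fin n → Fin m → ℝ))
    (hsym : ∀ ξ η : Fin n → Fin m → ℝ,
      ∑ i, ∑ j, A ξ i j * η i j = ∑ i, ∑ j, ξ i j * A η i j)
    (hell : ∀ ξ : Fin n → Fin m → ℝ,
      lam * (∑ i, ∑ j, ξ i j ^ 2) ≤ (∑ i, ∑ j, A ξ i j * ξ i j) ∧
      (∑ i, ∑ j, A ξ i j * ξ i j) ≤ Lam * (∑ i, ∑ j, ξ i j ^ 2))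
    (z : Fin m → ℝ) (hz : z ≠ 0) (P : Fin n → Fin m → ℝ) :
    (1 - δ ^ 2) * lam * Real.sqrt (∑ l, z l ^ 2) ^ α * (∑ i, ∑ j, P i j ^ 2) ≤
      ∑ i, ∑ j, A P i j *
        (Real.sqrt (∑ l, z l ^ 2) ^ α * P i j +
          α * Real.sqrt (∑ l, z l ^ 2) ^ (α - 2) * (∑ l, P i l * z l) * z j) := by
  classical
  -- basic positivity of |z|
  have hsum_pos : 0 < ∑ l, z l ^ 2 := by
    obtain ⟨l, hl⟩ := Function.ne_iff.mp hz
    have hl' : z l ≠ 0 := by simpa using hl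
    exact Finset.sum_pos' (fun i _ => sq_nonneg _)
      ⟨l, Finset.mem_univ l, by positivity⟩
  set r := Real.sqrt (∑ l, z l ^ 2) with hrdef
  have hrpos : 0 < r := Real.sqrt_pos.mpr hsum_pos
  have hr2 : r ^ 2 = ∑ l, z l ^ 2 := Real.sq_sqrt hsum_pos.le
  -- lam ≤ Lam
  have hlL : lam ≤ Lam := by
    have h := hell (fun _ _ => (1 : ℝ))
    have hS : (0:ℝ) < ∑ _i : Fin n, ∑ _j : Fin m, ((1:ℝ) ^ 2) := by
      simp only [one_pow, Finset.sum_const, Finset.card_univ, Fintype.card_fin,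
        nsmul_eq_mul, mul_one]
      have : (0:ℝ) < (n:ℝ) := by exact_mod_cast Nat.lt_of_lt_of_le Nat.zero_lt_one hn
      have : (0:ℝ) < (m:ℝ) := by exact_mod_cast Nat.lt_of_lt_of_le Nat.zero_lt_one hm
      positivity
    have := le_trans h.1 h.2
    exact le_of_mul_le_mul_right this hS
  -- ratio in product form
  have hratio' : α * Lam = δ * lam * (2 + α) := by
    have h2α : (0:ℝ) < 2 + α := by linarith
    field_simp at hratio
    linarith [hratio]
  -- decomposition
  set Q : Fin n → Fin m → ℝ := fun i j => (∑ l, P i l * z l) * z j / r ^ 2 with hQdef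
  set R : Fin n → Fin m → ℝ := fun i j => P i j - Q i j with hRdef
  have hPQR : P = Q + R := by
    funext i j
    simp [hRdef]
  -- row-wise orthogonality
  have horth : ∀ i, ∑ j, Q i j * R i j = 0 := by
    intro i
    have hQP : ∑ j, Q i j * P i j = (∑ l, P i l * z l) ^ 2 / r ^ 2 := by
      have : ∑ j, Q i j * P i j = (∑ j, P i j * z j) * (∑ l, P i l * z l) / r ^ 2 := by
        rw [Finset.sum_mul, Finset.sum_div]
        exact Finset.sum_congr rfl fun j _ => by rw [hQdef]; ring
      rw [this]; ring
    have hQQ : ∑ j, Q i j * Q i j = (∑ l, P i l * z l) ^ 2 / r ^ 2 := by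
      have : ∑ j, Q i j * Q i j
          = (∑ j, z j ^ 2) * ((∑ l, P i l * z l) ^ 2 / r ^ 4) := by
        rw [Finset.sum_mul]
        exact Finset.sum_congr rfl fun j _ => by rw [hQdef]; ring
      rw [this, ← hr2]
      field_simp
    have : ∑ j, Q i j * R i j = (∑ j, Q i j * P i j) - ∑ j, Q i j * Q i j := by
      rw [← Finset.sum_sub_distrib]
      exact Finset.sum_congr rfl fun j _ => by rw [hRdef]; ring
    rw [this, hQP, hQQ, sub_self]
  -- bilinear-form values
  set bQQ := ∑ i, ∑ j, A Q i j * Q i j with hbQQ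
  set bRR := ∑ i, ∑ j, A R i j * R i j with hbRR
  set bQR := ∑ i, ∑ j, A Q i j * R i j with hbQR
  set x2 := ∑ i, ∑ j, Q i j ^ 2 with hx2
  set y2 := ∑ i, ∑ j, R i j ^ 2 with hy2
  have hx2n : 0 ≤ x2 := Finset.sum_nonneg fun i _ => Finset.sum_nonneg fun j _ => sq_nonneg _
  have hy2n : 0 ≤ y2 := Finset.sum_nonneg fun i _ => Finset.sum_nonneg fun j _ => sq_nonneg _
  have hRQ : ∑ i, ∑ j, A R i j * Q i j = bQR := by
    rw [hsym R Q, hbQR]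
    exact Finset.sum_congr rfl fun i _ => Finset.sum_congr rfl fun j _ => by
      rw [mul_comm]
  -- Cauchy–Schwarz for B - lam⟨,⟩
  have hcs : bQR ^ 2 ≤ (bQQ - lam * x2) * (bRR - lam * y2) := by
    have key : ∀ t : ℝ,
        0 ≤ (bRR - lam * y2) * (t * t) + (2 * bQR) * t + (bQQ - lam * x2) := by
      intro t
      have h := (hell (Q + t • R)).1
      have hA : ∀ i j, A (Q + t • R) i j = A Q i j + t * A R i j := by
        intro i j
        rw [map_add, map_smul]
        simp
      have e1 : ∑ i, ∑ j, (Q + t • R) i j ^ 2 = x2 + t ^ 2 * y2 := by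
        have : ∀ i, ∑ j, (Q + t • R) i j ^ 2
            = (∑ j, Q i j ^ 2) + 2 * t * (∑ j, Q i j * R i j) + t ^ 2 * ∑ j, R i j ^ 2 := by
          intro i
          rw [Finset.mul_sum, Finset.mul_sum, ← Finset.sum_add_distrib, ← Finset.sum_add_distrib]
          exact Finset.sum_congr rfl fun j _ => by simp [Pi.add_apply]; ring
        rw [Finset.sum_congr rfl fun i _ => this i]
        simp only [horth, mul_zero, add_zero]
        rw [Finset.sum_add_distrib, ← Finset.mul_sum, hx2, hy2]
      have e2 : ∑ i, ∑ j, A (Q + t • R) i j * (Q + t • R) i j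
          = bQQ + 2 * t * bQR + t ^ 2 * bRR := by
        have : ∀ i, ∑ j, A (Q + t • R) i j * (Q + t • R) i j
            = (∑ j, A Q i j * Q i j) + t * (∑ j, A Q i j * R i j)
              + t * (∑ j, A R i j * Q i j) + t ^ 2 * ∑ j, A R i j * R i j := by
          intro i
          rw [Finset.mul_sum, Finset.mul_sum, Finset.mul_sum, ← Finset.sum_add_distrib,
            ← Finset.sum_add_distrib, ← Finset.sum_add_distrib]
          exact Finset.sum_congr rfl fun j _ => by rw [hA i j]; simp [Pi.add_apply]; ring
        rw [Finset.sum_congr rfl fun i _ => this i]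
        simp only [Finset.sum_add_distrib, ← Finset.mul_sum]
        rw [← hbQQ, ← hbRR, ← hbQR, hRQ]
        ring
      rw [e1, e2] at h
      nlinarith [h]
    have hd := discrim_le_zero (K := ℝ) key
    rw [discrim] at hd
    nlinarith [hd]
  -- ellipticity bounds
  have hQl : lam * x2 ≤ bQQ := (hell Q).1
  have hQu : bQQ ≤ Lam * x2 := (hell Q).2
  have hRl : lam * y2 ≤ bRR := (hell R).1
  -- core inequality
  have hcore := key_combine lam Lam α δ bQQ bRR bQR x2 y2 hlam hLam hlL hα hδ0 hδ1
    hratio' hx2n hy2n hQl hQu hRl hcs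
  -- |P|² = x2 + y2
  have hPP : ∑ i, ∑ j, P i j ^ 2 = x2 + y2 := by
    have : ∀ i, ∑ j, P i j ^ 2
        = (∑ j, Q i j ^ 2) + 2 * (∑ j, Q i j * R i j) + ∑ j, R i j ^ 2 := by
      intro i
      rw [Finset.mul_sum, ← Finset.sum_add_distrib, ← Finset.sum_add_distrib]
      exact Finset.sum_congr rfl fun j _ => by rw [hRdef]; ring
    rw [Finset.sum_congr rfl fun i _ => this i]
    simp only [horth, mul_zero, add_zero]
    rw [Finset.sum_add_distrib, hx2, hy2]
  -- A P applied
  have hAP : ∀ i j, A P i j = A Q i j + A R i j := by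
    intro i j
    rw [hPQR, map_add]
    simp
  -- rewrite RHS
  have hpow : r ^ (α - 2) * r ^ 2 = r ^ α := by
    rw [Real.rpow_sub hrpos, show ((2:ℝ)) = ((2:ℕ):ℝ) by norm_num, Real.rpow_natCast]
    field_simp
  have hterm : ∀ i j, A P i j *
        (r ^ α * P i j + α * r ^ (α - 2) * (∑ l, P i l * z l) * z j)
      = r ^ α * (A P i j * (P i j + α * Q i j)) := by
    intro i j
    have hQ : Q i j = (∑ l, P i l * z l) * z j / r ^ 2 := rfl
    have hr0 : (r : ℝ) ≠ 0 := hrpos.ne'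
    have : α * r ^ (α - 2) * (∑ l, P i l * z l) * z j = r ^ α * (α * Q i j) := by
      rw [hQ, ← hpow]
      field_simp
    rw [this]
    ring
  have hRHS : ∑ i, ∑ j, A P i j *
        (r ^ α * P i j + α * r ^ (α - 2) * (∑ l, P i l * z l) * z j)
      = r ^ α * ∑ i, ∑ j, A P i j * (P i j + α * Q i j) := by
    have h1 : ∑ i, ∑ j, A P i j *
          (r ^ α * P i j + α * r ^ (α - 2) * (∑ l, P i l * z l) * z j)
        = ∑ i, ∑ j, r ^ α * (A P i j * (P i j + α * Q i j)) :=
      Finset.sum_congr rfl fun i _ => Finset.sum_congr rfl fun j _ => hterm i j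
    rw [h1]
    simp only [← Finset.mul_sum]
  -- expand the inner sum
  have hexp : ∑ i, ∑ j, A P i j * (P i j + α * Q i j)
      = (1 + α) * bQQ + bRR + (2 + α) * bQR := by
    have : ∀ i, ∑ j, A P i j * (P i j + α * Q i j)
        = (1 + α) * (∑ j, A Q i j * Q i j) + (∑ j, A Q i j * R i j)
          + (1 + α) * (∑ j, A R i j * Q i j) + (∑ j, A R i j * R i j) := by
      intro i
      rw [Finset.mul_sum, Finset.mul_sum]
      simp only [← Finset.sum_add_distrib]
      apply Finset.sum_congr rfl
      intro j _
      have hR : R i j = P i j - Q i j := rfl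
      rw [hAP i j, hR]
      ring
    rw [Finset.sum_congr rfl fun i _ => this i]
    simp only [Finset.sum_add_distrib, ← Finset.mul_sum]
    rw [← hbQQ, ← hbRR, ← hbQR, hRQ]
    ring
  rw [hRHS, hexp, hPP]
  have hrα : 0 < r ^ α := Real.rpow_pos_of_pos hrpos α
  calc (1 - δ ^ 2) * lam * r ^ α * (x2 + y2)
      = r ^ α * ((1 - δ ^ 2) * lam * (x2 + y2)) := by ring
    _ ≤ r ^ α * ((1 + α) * bQQ + bRR + (2 + α) * bQR) := by
        exact mul_le_mul_of_nonneg_left hcore hrα.le
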